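/- Let (X,d) be a nonempty compact metric space. Let η : [0,T] → X be a unit-speed geodesic and let 0 ≤ s < t ≤ T be such that the restriction of η to [s,t] is the unique geodesic between its endpoints; that is, every unit-speed geodesic ξ : [0,t−s] → X with ξ(0) = η(s) and ξ(t−s) = η(t) satisfies ξ(u) = η(s+u) for all u ∈ [0,t−s]. Let (ξ_n) be any sequence of unit-speed geodesics ξ_n : [0,S_n] → X such that ξ_n(0) → η(s) and ξ_n(S_n) → η(t) as n → ∞. Then S_n → t−s, and the Hausdorff distance between ξ_n([0,S_n]) and η([s,t]) tends to 0 as n → ∞. -/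

import Mathlib

/-- A unit-speed geodesic `η : [0,T] → X`: `dist (η s) (η t) = |s - t|` for `s, t ∈ [0,T]`. -/
def IsUnitSpeedGeodesic {X : Type*} [MetricSpace X] (η : ℝ → X) (T : ℝ) : Prop :=
  ∀ s ∈ Set.Icc (0 : ℝ) T, ∀ t ∈ Set.Icc (0 : ℝ) T, dist (η s) (η t) = |s - t|

/-- In a nonempty compact metric space, if `η|_{[s,t]}` is the unique geodesic between its
endpoints, then any sequence of geodesics whose endpoints converge to `η(s)` and `η(t)`
converges to `η|_{[s,t]}`: lengths converge to `t - s` and images converge in the Hausdorff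
distance. -/
theorem geodesics_converge_to_unique_geodesic {X : Type*} [MetricSpace X] [Nonempty X]
    [CompactSpace X]
    (η : ℝ → X) (T s t : ℝ) (hT : 0 ≤ T)
    (hη : IsUnitSpeedGeodesic η T) (hs : 0 ≤ s) (hst : s < t) (htT : t ≤ T)
    (huniq : ∀ ξ : ℝ → X, IsUnitSpeedGeodesic ξ (t - s) → ξ 0 = η s → ξ (t - s) = η t →
      ∀ u ∈ Set.Icc (0 : ℝ) (t - s), ξ u = η (s + u))
    (ξ : ℕ → ℝ → X) (Sn : ℕ → ℝ) (hSn : ∀ n, 0 ≤ Sn n)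
    (hξ : ∀ n, IsUnitSpeedGeodesic (ξ n) (Sn n))
    (h0 : Filter.Tendsto (fun n => ξ n 0) Filter.atTop (nhds (η s)))
    (h1 : Filter.Tendsto (fun n => ξ n (Sn n)) Filter.atTop (nhds (η t))) :
    Filter.Tendsto Sn Filter.atTop (nhds (t - s)) ∧
      Filter.Tendsto
        (fun n => EMetric.hausdorffEdist (ξ n '' Set.Icc 0 (Sn n)) (η '' Set.Icc s t))
        Filter.atTop (nhds 0) := by
  have hL : 0 < t - s := sub_pos.2 hst
  set L : ℝ := t - s with hLdef
  have hsT : s ≤ T := (le_of_lt hst).trans htT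
  have ht0 : 0 ≤ t := hs.trans hst.le
  -- Part 1: lengths converge
  have hdistST : ∀ n, dist (ξ n 0) (ξ n (Sn n)) = Sn n := fun n => by
    rw [hξ n 0 ⟨le_refl 0, hSn n⟩ (Sn n) ⟨hSn n, le_refl _⟩, zero_sub, abs_neg,
      abs_of_nonneg (hSn n)]
  have hdistη : dist (η s) (η t) = L := by
    rw [hη s ⟨hs, hsT⟩ t ⟨ht0, htT⟩, abs_sub_comm, abs_of_nonneg hL.le]
  have hTS : Filter.Tendsto Sn Filter.atTop (nhds L) := by
    have h := h0.dist h1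
    rw [hdistη] at h
    exact h.congr fun n => hdistST n
  refine ⟨hTS, ?_⟩
  -- Setup: reparametrize each geodesic to the domain [0, L]
  haveI : CompactSpace (Set.Icc (0:ℝ) L) := isCompact_iff_compactSpace.mp isCompact_Icc
  set c : ℕ → ℝ := fun n => Sn n / L with hc_def
  have hc0 : ∀ n, 0 ≤ c n := fun n => div_nonneg (hSn n) hL.le
  have hcL : ∀ n, c n * L = Sn n := fun n => div_mul_cancel₀ _ hL.ne'
  have hcmem : ∀ n, ∀ u : ℝ, u ∈ Set.Icc (0:ℝ) L → c n * u ∈ Set.Icc 0 (Sn n) := by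
    intro n u hu
    refine ⟨mul_nonneg (hc0 n) hu.1, ?_⟩
    calc c n * u ≤ c n * L := mul_le_mul_of_nonneg_left hu.2 (hc0 n)
      _ = Sn n := hcL n
  have hgd : ∀ n, ∀ u ∈ Set.Icc (0:ℝ) L, ∀ v ∈ Set.Icc (0:ℝ) L,
      dist (ξ n (c n * u)) (ξ n (c n * v)) = c n * |u - v| := by
    intro n u hu v hv
    rw [hξ n _ (hcmem n u hu) _ (hcmem n v hv), ← mul_sub, abs_mul, abs_of_nonneg (hc0 n)]
  have hlip : ∀ n, LipschitzWith (c n).toNNReal (fun x : Set.Icc (0:ℝ) L => ξ n (c n * x)) := by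
    intro n
    apply LipschitzWith.of_dist_le_mul
    intro x y
    rw [Subtype.dist_eq, Real.dist_eq, Real.coe_toNNReal _ (hc0 n)]
    exact le_of_eq (hgd n x x.2 y y.2)
  set G : ℕ → BoundedContinuousFunction (Set.Icc (0:ℝ) L) X :=
    fun n => BoundedContinuousFunction.mkOfCompact ⟨_, (hlip n).continuous⟩ with hG_def
  have hGapp : ∀ n x, G n x = ξ n (c n * x) := fun n x => rfl
  have hc1 : Filter.Tendsto c Filter.atTop (nhds 1) := by
    have h := hTS.div_const L
    rwa [div_self hL.ne'] at h
  -- The compact set of 2-Lipschitz bounded continuous functions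
  set A : Set (BoundedContinuousFunction (Set.Icc (0:ℝ) L) X) :=
    {f | ∀ x y, dist (f x) (f y) ≤ 2 * dist x y} with hA_def
  have hAclosed : IsClosed A := by
    have hrw : A = ⋂ (x : Set.Icc (0:ℝ) L) (y : Set.Icc (0:ℝ) L),
        {f : BoundedContinuousFunction (Set.Icc (0:ℝ) L) X | dist (f x) (f y) ≤ 2 * dist x y} := by
      ext f; simp only [hA_def, Set.mem_setOf_eq, Set.mem_iInter]
    rw [hrw]
    exact isClosed_iInter fun x => isClosed_iInter fun y =>
      isClosed_le ((continuous_eval_const (F := BoundedContinuousFunction (Set.Icc (0:ℝ) L) X) (x := x)).dist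
        (continuous_eval_const (F := BoundedContinuousFunction (Set.Icc (0:ℝ) L) X) (x := y))) continuous_const
  have hequi : Equicontinuous ((↑) : A → Set.Icc (0:ℝ) L → X) := by
    apply Metric.equicontinuous_of_continuity_modulus (fun r => 2 * r)
    · simpa using ((continuous_mul_left (2:ℝ)).tendsto 0)
    · intro x y f
      exact f.2 x y
  have hAcomp : IsCompact A := BoundedContinuousFunction.arzela_ascoli₁ A hAclosed hequi
  -- it suffices to handle subsequences
  apply Filter.tendsto_of_subseq_tendsto
  intro ns hns
  have h2 : ∀ᶠ k in Filter.atTop, c (ns k) ≤ 2 :=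
    hns.eventually (hc1.eventually_le_const one_lt_two)
  obtain ⟨N, hN⟩ := Filter.eventually_atTop.mp h2
  have hmem : ∀ k, G (ns (k + N)) ∈ A := by
    intro k
    intro x y
    have hc2 : c (ns (k + N)) ≤ 2 := hN (k + N) (Nat.le_add_left N k)
    rw [hGapp, hGapp, Subtype.dist_eq, Real.dist_eq]
    calc dist (ξ (ns (k + N)) (c (ns (k + N)) * x)) (ξ (ns (k + N)) (c (ns (k + N)) * y))
        = c (ns (k + N)) * |(x:ℝ) - y| := hgd _ x x.2 y y.2
      _ ≤ 2 * |(x:ℝ) - y| := mul_le_mul_of_nonneg_right hc2 (abs_nonneg _)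
  obtain ⟨F, hFA, φ, hφ, hconv⟩ := hAcomp.tendsto_subseq hmem
  set b : ℕ → ℕ := fun k => ns (φ k + N) with hb_def
  have hbtend : Filter.Tendsto b Filter.atTop Filter.atTop :=
    hns.comp ((Filter.tendsto_add_atTop_nat N).comp hφ.tendsto_atTop)
  have hconv' : Filter.Tendsto (fun k => G (b k)) Filter.atTop (nhds F) := hconv
  have hpt : ∀ x : Set.Icc (0:ℝ) L,
      Filter.Tendsto (fun k => G (b k) x) Filter.atTop (nhds (F x)) := fun x =>
    ((continuous_eval_const (F := BoundedContinuousFunction (Set.Icc (0:ℝ) L) X) (x := x)).tendsto F).comp hconv'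
  have hcb : Filter.Tendsto (fun k => c (b k)) Filter.atTop (nhds 1) := hc1.comp hbtend
  -- the limit is a unit-speed geodesic
  have hFdist : ∀ x y : Set.Icc (0:ℝ) L, dist (F x) (F y) = |(x:ℝ) - y| := by
    intro x y
    have ha : Filter.Tendsto (fun k => dist (G (b k) x) (G (b k) y)) Filter.atTop
        (nhds (dist (F x) (F y))) := (hpt x).dist (hpt y)
    have hb : Filter.Tendsto (fun k => dist (G (b k) x) (G (b k) y)) Filter.atTop
        (nhds (|(x:ℝ) - y|)) := by
      have heq : (fun k => dist (G (b k) x) (G (b k) y))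
          = fun k => c (b k) * |(x:ℝ) - y| := funext fun k => by
        rw [hGapp, hGapp]; exact hgd (b k) x x.2 y y.2
      rw [heq]
      simpa using hcb.mul_const (|(x:ℝ) - y|)
    exact tendsto_nhds_unique ha hb
  set f : ℝ → X := fun u => F (Set.projIcc 0 L hL.le u) with hf_def
  have hfeq : ∀ u (hu : u ∈ Set.Icc (0:ℝ) L), f u = F ⟨u, hu⟩ := fun u hu => by
    rw [hf_def]
    simp only [Set.projIcc_of_mem hL.le hu]
  have hgeo : IsUnitSpeedGeodesic f L := by
    intro u hu v hv
    rw [hfeq u hu, hfeq v hv, hFdist]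
  have hzero : (0:ℝ) ∈ Set.Icc (0:ℝ) L := ⟨le_refl 0, hL.le⟩
  have hLmem : L ∈ Set.Icc (0:ℝ) L := ⟨hL.le, le_refl L⟩
  have hstart : f 0 = η s := by
    rw [hfeq 0 hzero]
    refine tendsto_nhds_unique (hpt ⟨0, hzero⟩) ?_
    have heq : (fun k => G (b k) ⟨0, hzero⟩) = fun k => ξ (b k) 0 := funext fun k => by
      rw [hGapp]; norm_num
    rw [heq]
    exact h0.comp hbtend
  have hend : f L = η t := by
    rw [hfeq L hLmem]
    refine tendsto_nhds_unique (hpt ⟨L, hLmem⟩) ?_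
    have heq : (fun k => G (b k) ⟨L, hLmem⟩) = fun k => ξ (b k) (Sn (b k)) := funext fun k => by
      rw [hGapp, hcL]
    rw [heq]
    exact h1.comp hbtend
  have hFη : ∀ u (hu : u ∈ Set.Icc (0:ℝ) L), F ⟨u, hu⟩ = η (s + u) := by
    intro u hu
    rw [← hfeq u hu]
    exact huniq f hgeo hstart hend u hu
  -- images as images of [0, L]
  have himgξ : ∀ n, ξ n '' Set.Icc 0 (Sn n) = (fun u => ξ n (c n * u)) '' Set.Icc 0 L := by
    intro n
    rw [← Set.image_image (ξ n) (fun u => c n * u), Set.image_mul_left_Icc (hc0 n) hL.le,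
      mul_zero, hcL]
  have himgη : η '' Set.Icc s t = (fun u => η (s + u)) '' Set.Icc 0 L := by
    rw [← Set.image_image η (fun u => s + u), Set.image_const_add_Icc, add_zero, hLdef,
      add_sub_cancel]
  -- Hausdorff distance bound along the subsequence
  have key : ∀ k, EMetric.hausdorffEdist (ξ (b k) '' Set.Icc 0 (Sn (b k))) (η '' Set.Icc s t)
      ≤ ENNReal.ofReal (dist (G (b k)) F) := by
    intro k
    rw [himgξ (b k), himgη]
    apply EMetric.hausdorffEdist_le_of_mem_edist
    · rintro x ⟨u, hu, rfl⟩
      refine ⟨η (s + u), Set.mem_image_of_mem _ hu, ?_⟩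
      have hb' : edist (G (b k) ⟨u, hu⟩) (F ⟨u, hu⟩) ≤ ENNReal.ofReal (dist (G (b k)) F) := by
        rw [edist_dist]
        exact ENNReal.ofReal_le_ofReal (BoundedContinuousFunction.dist_coe_le_dist _)
      calc edist ((fun u => ξ (b k) (c (b k) * u)) u) (η (s + u))
          = edist (G (b k) ⟨u, hu⟩) (F ⟨u, hu⟩) := by rw [hFη u hu]; rfl
        _ ≤ _ := hb'
    · rintro x ⟨u, hu, rfl⟩
      refine ⟨ξ (b k) (c (b k) * u), Set.mem_image_of_mem _ hu, ?_⟩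
      have hb' : edist (G (b k) ⟨u, hu⟩) (F ⟨u, hu⟩) ≤ ENNReal.ofReal (dist (G (b k)) F) := by
        rw [edist_dist]
        exact ENNReal.ofReal_le_ofReal (BoundedContinuousFunction.dist_coe_le_dist _)
      calc edist ((fun u => η (s + u)) u) (ξ (b k) (c (b k) * u))
          = edist (F ⟨u, hu⟩) (G (b k) ⟨u, hu⟩) := by rw [hFη u hu]; rfl
        _ = edist (G (b k) ⟨u, hu⟩) (F ⟨u, hu⟩) := edist_comm _ _
        _ ≤ _ := hb'
  refine ⟨fun k => φ k + N, ?_⟩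
  have hb0 : Filter.Tendsto (fun k => ENNReal.ofReal (dist (G (b k)) F)) Filter.atTop
      (nhds 0) := by
    have hd : Filter.Tendsto (fun k => dist (G (b k)) F) Filter.atTop (nhds 0) :=
      tendsto_iff_dist_tendsto_zero.mp hconv'
    simpa using ENNReal.tendsto_ofReal hd
  exact tendsto_of_tendsto_of_tendsto_of_le_of_le tendsto_const_nhds hb0
    (fun k => zero_le) key
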